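/- Suppose A ∈ ℝ^{n×n}, B ∈ ℝ^{n×m}, η, β > 0, and assume: (i) there exists K* ∈ ℝ^{m×n} with (η/(η+β))‖A+BK*‖₂ + (β/(η+β))‖A‖₂ = δ < 1. Let K = -(η/(η+β))(BᵀB)†BᵀA. Then the closed-loop system x_{t+1} = (A+BK)x_t satisfies ‖x_{t+1}‖₂ ≤ δ‖x_t‖₂ for all t, hence ‖x_t‖₂ ≤ δ^t ‖x₀‖₂ decays exponentially. -/
import Mathlib

open Matrix

/-- The four Penrose conditions characterizing the Moore–Penrose pseudoinverse `P` of `A`. -/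
def IsMoorePenrose {k l : Type*} [Fintype k] [Fintype l]
    (A : Matrix k l ℝ) (P : Matrix l k ℝ) : Prop :=
  A * P * A = A ∧ P * A * P = P ∧ (A * P)ᵀ = A * P ∧ (P * A)ᵀ = P * A

/-- The Euclidean (ℓ²) norm of a vector in `ℝ^n`. -/
noncomputable def vecNorm {k : Type*} [Fintype k] (v : k → ℝ) : ℝ :=
  Real.sqrt (∑ i, (v i) ^ 2)

/-- The ℓ²→ℓ² operator (spectral) norm of a real matrix. -/
noncomputable def opNorm2 {k l : ℕ} (M : Matrix (Fin k) (Fin l) ℝ) : ℝ :=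
  ‖LinearMap.toContinuousLinearMap (Matrix.toEuclideanLin M)‖

open scoped Matrix.Norms.L2Operator

lemma opNorm2_eq_norm {k l : ℕ} (M : Matrix (Fin k) (Fin l) ℝ) : opNorm2 M = ‖M‖ := rfl

lemma vecNorm_eq_norm {k : ℕ} (v : Fin k → ℝ) :
    vecNorm v = ‖(EuclideanSpace.equiv (Fin k) ℝ).symm v‖ := by
  rw [vecNorm, EuclideanSpace.norm_eq]
  simp [Real.norm_eq_abs, sq_abs]

/-- `B (BᵀB)† Bᵀ B = B`. -/
lemma BPBtB_eq {n m : ℕ} (B : Matrix (Fin n) (Fin m) ℝ) (P : Matrix (Fin m) (Fin m) ℝ)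
    (h1 : Bᵀ * B * P * (Bᵀ * B) = Bᵀ * B) :
    B * P * Bᵀ * B = B := by
  have h1r : Bᵀ * (B * (P * (Bᵀ * B))) = Bᵀ * B := by simpa [Matrix.mul_assoc] using h1
  have hM : (B * P * Bᵀ * B - B)ᵀ * (B * P * Bᵀ * B - B) = 0 := by
    simp only [Matrix.transpose_sub, Matrix.transpose_mul, Matrix.transpose_transpose,
      Matrix.sub_mul, Matrix.mul_sub, Matrix.mul_assoc]
    rw [h1r]
    abel
  rw [← Matrix.conjTranspose_eq_transpose_of_trivial] at hM
  exact sub_eq_zero.mp (Matrix.conjTranspose_mul_self_eq_zero.mp hM)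

/-- if there exists `K*` with
`(η/(η+β))‖A+BK*‖₂ + (β/(η+β))‖A‖₂ = δ < 1`, then with
`K = -(η/(η+β))(BᵀB)†BᵀA` the closed loop `x_{t+1} = (A+BK)x_t` satisfies
`‖x_{t+1}‖₂ ≤ δ‖x_t‖₂` for all `t`, hence `‖x_t‖₂ ≤ δ^t ‖x₀‖₂`. -/
theorem stmt_5 {n m : ℕ} (A : Matrix (Fin n) (Fin n) ℝ) (B : Matrix (Fin n) (Fin m) ℝ)
    (η β : ℝ) (hη : 0 < η) (hβ : 0 < β)
    (δ : ℝ) (Kstar : Matrix (Fin m) (Fin n) ℝ)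
    (hδ : η / (η + β) * opNorm2 (A + B * Kstar) + β / (η + β) * opNorm2 A = δ)
    (hδ1 : δ < 1)
    (P : Matrix (Fin m) (Fin m) ℝ) (hP : IsMoorePenrose (Bᵀ * B) P)
    (K : Matrix (Fin m) (Fin n) ℝ) (hK : K = -((η / (η + β)) • (P * Bᵀ * A)))
    (x : ℕ → Fin n → ℝ) (hx : ∀ t, x (t + 1) = (A + B * K).mulVec (x t)) :
    (∀ t, vecNorm (x (t + 1)) ≤ δ * vecNorm (x t)) ∧
    ∀ t, vecNorm (x t) ≤ δ ^ t * vecNorm (x 0) := by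
  obtain ⟨h1, h2, h3, h4⟩ := hP
  set c : ℝ := η / (η + β) with hc
  set d : ℝ := β / (η + β) with hd
  have hηβ : 0 < η + β := by linarith
  have hc0 : 0 ≤ c := by positivity
  have hd0 : 0 ≤ d := by positivity
  have hcd : c + d = 1 := by rw [hc, hd]; field_simp
  have hBPB : B * P * Bᵀ * B = B := BPBtB_eq B P h1
  have hBt : Bᵀ * (B * (Pᵀ * Bᵀ)) = Bᵀ := by
    have := congrArg Matrix.transpose hBPB
    simpa [Matrix.transpose_mul, Matrix.mul_assoc] using this
  set Prj : Matrix (Fin n) (Fin n) ℝ := B * P * Bᵀ with hPrj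
  set Q : Matrix (Fin n) (Fin n) ℝ := 1 - Prj with hQ
  -- Prj is idempotent
  have hPP : Prj * Prj = Prj := by
    calc Prj * Prj = B * (P * (Bᵀ * B) * P) * Bᵀ := by
          rw [hPrj]; simp only [Matrix.mul_assoc]
      _ = Prj := by rw [h2, hPrj, Matrix.mul_assoc]
  -- Prj is symmetric
  have hPs : Prjᵀ = Prj := by
    have e1 : Prjᵀ = B * Pᵀ * Bᵀ := by
      rw [hPrj]; simp [Matrix.transpose_mul, Matrix.mul_assoc]
    rw [e1]
    calc B * Pᵀ * Bᵀ = (B * P * Bᵀ * B) * Pᵀ * Bᵀ := by rw [hBPB]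
      _ = B * P * (Bᵀ * (B * (Pᵀ * Bᵀ))) := by simp only [Matrix.mul_assoc]
      _ = Prj := by rw [hBt, hPrj, Matrix.mul_assoc]
  -- Q is a symmetric idempotent, so ‖Q‖ ≤ 1
  have hQs : Qᵀ = Q := by simp [hQ, Matrix.transpose_sub, hPs]
  have hQQ : Q * Q = Q := by
    simp only [hQ, Matrix.sub_mul, Matrix.mul_sub, Matrix.one_mul, Matrix.mul_one, hPP]
    abel
  have hQnorm : ‖Q‖ ≤ 1 := by
    have h := CStarRing.norm_star_mul_self (x := Q)
    rw [Matrix.star_eq_conjTranspose, Matrix.conjTranspose_eq_transpose_of_trivial,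
      hQs, hQQ] at h
    nlinarith [norm_nonneg Q]
  -- Q * B = 0, hence Q * A = Q * (A + B * Kstar)
  have hQB : Q * B = 0 := by
    rw [hQ, Matrix.sub_mul, Matrix.one_mul, hPrj, hBPB, sub_self]
  have hQA : Q * A = Q * (A + B * Kstar) := by
    rw [Matrix.mul_add, ← Matrix.mul_assoc, hQB, Matrix.zero_mul, add_zero]
  -- closed loop matrix decomposition
  have hABK : A + B * K = d • A + c • (Q * A) := by
    rw [hK]
    have hBK : B * -(c • (P * Bᵀ * A)) = -(c • (Prj * A)) := by
      rw [Matrix.mul_neg, Matrix.mul_smul]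
      rw [hPrj]; simp only [Matrix.mul_assoc]
    rw [hBK]
    have e2 : Q * A = A - Prj * A := by rw [hQ, Matrix.sub_mul, Matrix.one_mul]
    rw [e2]
    match_scalars <;> linarith
  -- norm bound on the closed loop matrix
  have hnorm : ‖A + B * K‖ ≤ δ := by
    rw [hABK, ← hδ, opNorm2_eq_norm, opNorm2_eq_norm]
    have t1 : ‖d • A‖ = d * ‖A‖ := by
      rw [norm_smul, Real.norm_eq_abs, abs_of_nonneg hd0]
    have t2 : ‖c • (Q * A)‖ ≤ c * ‖A + B * Kstar‖ := by
      rw [norm_smul, Real.norm_eq_abs, abs_of_nonneg hc0, hQA]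
      have := Matrix.l2_opNorm_mul Q (A + B * Kstar)
      have h3 : ‖Q‖ * ‖A + B * Kstar‖ ≤ 1 * ‖A + B * Kstar‖ :=
        mul_le_mul_of_nonneg_right hQnorm (norm_nonneg _)
      nlinarith [norm_nonneg (A + B * Kstar)]
    calc ‖d • A + c • (Q * A)‖ ≤ ‖d • A‖ + ‖c • (Q * A)‖ := norm_add_le _ _
      _ ≤ d * ‖A‖ + c * ‖A + B * Kstar‖ := by rw [t1]; linarith
      _ = c * ‖A + B * Kstar‖ + d * ‖A‖ := by ring
  have hδ0 : 0 ≤ δ := by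
    rw [← hδ]
    have := norm_nonneg (A + B * Kstar)
    have := norm_nonneg A
    rw [opNorm2_eq_norm, opNorm2_eq_norm] at *
    positivity
  -- the step bound
  have step : ∀ t, vecNorm (x (t + 1)) ≤ δ * vecNorm (x t) := by
    intro t
    rw [hx t, vecNorm_eq_norm, vecNorm_eq_norm]
    have h := Matrix.l2_opNorm_mulVec (A + B * K)
      ((EuclideanSpace.equiv (Fin n) ℝ).symm (x t))
    have hle : ‖A + B * K‖ * ‖(EuclideanSpace.equiv (Fin n) ℝ).symm (x t)‖ ≤
        δ * ‖(EuclideanSpace.equiv (Fin n) ℝ).symm (x t)‖ :=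
      mul_le_mul_of_nonneg_right hnorm (norm_nonneg _)
    exact le_trans (by exact h) hle
  refine ⟨step, ?_⟩
  intro t
  induction t with
  | zero => simp
  | succ t ih =>
    calc vecNorm (x (t + 1)) ≤ δ * vecNorm (x t) := step t
      _ ≤ δ * (δ ^ t * vecNorm (x 0)) := mul_le_mul_of_nonneg_left ih hδ0
      _ = δ ^ (t + 1) * vecNorm (x 0) := by ring
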